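/- Let r ≥ 1 and suppose A ∈ E_k(n,r). Then the restriction ρ(A) belongs to E_k(n,r-1); thus ρ is a k-linear map from E_k(n,r) into E_k(n,r-1) (with E_k(n,0) = k). -/
import Mathlib


open Finset

/-- The value-type of a multi-index `i ∈ I(n,r)`, encoded as the equivalence
relation on places whose classes are the blocks `{α : i α = v}`. -/
def vt {n r : ℕ} (i : Fin r → Fin n) : Fin r → Fin r → Prop :=
  fun a b => i a = i b

/-- Condition (G): for each place `α` and each pair of multi-indices obtained by
deleting place `α`, all row and column `α`-slice sums equal a common scalar. -/
def CondG (k : Type*) [CommRing k] (n r : ℕ)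
    (A : Matrix (Fin r → Fin n) (Fin r → Fin n) k) : Prop :=
  ∀ (α : Fin r) (i j : Fin r → Fin n), ∃ b : k,
    (∀ y : Fin n, (∑ x : Fin n, A (Function.update i α x) (Function.update j α y)) = b) ∧
    (∀ x : Fin n, (∑ y : Fin n, A (Function.update i α x) (Function.update j α y)) = b)

/-- Condition (H): entries vanish when row and column indices have different value-types. -/
def CondH (k : Type*) [CommRing k] (n r : ℕ)
    (A : Matrix (Fin r → Fin n) (Fin r → Fin n) k) : Prop :=
  ∀ i j : Fin r → Fin n, vt i ≠ vt j → A i j = 0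

/-- Condition (S): invariance under simultaneous place permutation of rows and columns. -/
def CondS (k : Type*) [CommRing k] (n r : ℕ)
    (A : Matrix (Fin r → Fin n) (Fin r → Fin n) k) : Prop :=
  ∀ (σ : Equiv.Perm (Fin r)) (i j : Fin r → Fin n), A (i ∘ σ) (j ∘ σ) = A i j

/-- Membership in the centralizer algebra `E_k(n,r) = End_{P_r(n)}(V^{⊗r})`. -/
def MemE (k : Type*) [CommRing k] (n r : ℕ)
    (A : Matrix (Fin r → Fin n) (Fin r → Fin n) k) : Prop :=
  CondG k n r A ∧ CondH k n r A ∧ CondS k n r A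

/-- The restriction `ρ(A) ∈ Mat_{I(n,r-1)}(k)`: its `(p,q)`-entry is the slice sum
`Σ_x a^{p x}_{q 0}`, which for `A ∈ E_k(n,r)` is the common value of all slice
sums of `A` indexed by `p, q`. -/
def rho (k : Type*) [CommRing k] (n r : ℕ) [NeZero n]
    (A : Matrix (Fin (r+1) → Fin n) (Fin (r+1) → Fin n) k) :
    Matrix (Fin r → Fin n) (Fin r → Fin n) k :=
  Matrix.of fun p q => ∑ x : Fin n, A (Fin.snoc p x) (Fin.snoc q 0)

/-- The `k`-module `E_k(n,r)^i_j` of special invariants: those `A ∈ E_k(n,r)` such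
that `A s t ≠ 0` implies `Λ_i(s) = Λ_j(t)`. -/
def MemESpec (k : Type*) [CommRing k] (n r : ℕ) (i j : Fin n)
    (A : Matrix (Fin r → Fin n) (Fin r → Fin n) k) : Prop :=
  MemE k n r A ∧ ∀ s t : Fin r → Fin n, A s t ≠ 0 → ∀ α : Fin r, s α = i ↔ t α = j

/-- The `r`-th Kronecker power `P(w)^{⊗r}` of the permutation matrix of `w`. -/
def kron (k : Type*) [CommRing k] (n r : ℕ) (w : Equiv.Perm (Fin n)) :
    Matrix (Fin r → Fin n) (Fin r → Fin n) k :=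
  Matrix.of fun i j => if i = ⇑w ∘ j then 1 else 0

/-- Extend a permutation of `Fin r` to `Fin (r+1)`, fixing the last place. -/
def extPerm {r : ℕ} (σ : Equiv.Perm (Fin r)) : Equiv.Perm (Fin (r+1)) where
  toFun := Fin.lastCases (Fin.last r) (fun i => (σ i).castSucc)
  invFun := Fin.lastCases (Fin.last r) (fun i => (σ.symm i).castSucc)
  left_inv a := by
    induction a using Fin.lastCases with
    | last => simp
    | cast i => simp
  right_inv a := by
    induction a using Fin.lastCases with
    | last => simp
    | cast i => simp

lemma snoc_comp_extPerm {n r : ℕ} (p : Fin r → Fin n) (x : Fin n)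
    (σ : Equiv.Perm (Fin r)) :
    (Fin.snoc p x : Fin (r+1) → Fin n) ∘ (extPerm σ) = Fin.snoc (p ∘ σ) x := by
  funext a
  induction a using Fin.lastCases with
  | last => simp [extPerm]
  | cast i => simp [extPerm]

theorem stmt_5 {k : Type*} [CommRing k] {n r : ℕ} [NeZero n]
    (A : Matrix (Fin (r+1) → Fin n) (Fin (r+1) → Fin n) k)
    (hA : MemE k n (r+1) A) :
    MemE k n r (rho k n r A) := by
  obtain ⟨hG, hH, hS⟩ := hA
  classical
  choose b hb1 hb2 using hG
  refine ⟨?_, ?_, ?_⟩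
  · -- CondG
    intro α i j
    refine ⟨∑ z : Fin n, b α.castSucc (Fin.snoc i z) (Fin.snoc j 0), ?_, ?_⟩
    · intro y
      have : ∀ x : Fin n, rho k n r A (Function.update i α x) (Function.update j α y)
          = ∑ z : Fin n, A (Function.update (Fin.snoc i z) α.castSucc x)
              (Function.update (Fin.snoc j 0) α.castSucc y) := by
        intro x
        simp only [rho, Matrix.of_apply, Fin.snoc_update]
      rw [Finset.sum_congr rfl (fun x _ => this x), Finset.sum_comm]
      exact Finset.sum_congr rfl (fun z _ => hb1 α.castSucc (Fin.snoc i z) (Fin.snoc j 0) y)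
    · intro x
      have : ∀ y : Fin n, rho k n r A (Function.update i α x) (Function.update j α y)
          = ∑ z : Fin n, A (Function.update (Fin.snoc i z) α.castSucc x)
              (Function.update (Fin.snoc j 0) α.castSucc y) := by
        intro y
        simp only [rho, Matrix.of_apply, Fin.snoc_update]
      rw [Finset.sum_congr rfl (fun y _ => this y), Finset.sum_comm]
      exact Finset.sum_congr rfl (fun z _ => hb2 α.castSucc (Fin.snoc i z) (Fin.snoc j 0) x)
  · -- CondH
    intro p q hpq
    have : ∀ x : Fin n, A (Fin.snoc p x) (Fin.snoc q 0) = 0 := by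
      intro x
      apply hH
      intro h
      apply hpq
      funext a c
      have h2 := congrFun (congrFun h a.castSucc) c.castSucc
      simpa [vt, Fin.snoc_castSucc] using h2
    simp [rho, this]
  · -- CondS
    intro σ p q
    simp only [rho, Matrix.of_apply]
    refine Finset.sum_congr rfl (fun x _ => ?_)
    rw [← snoc_comp_extPerm p x σ, ← snoc_comp_extPerm q 0 σ]
    exact hS (extPerm σ) _ _
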